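/- A segment in ℝ² whose only lattice points are its two (lattice point) endpoints cannot be written as the Minkowski sum of two lattice polytopes each of positive dimension; in fact, if E = G + H with G, H lattice polytopes, then G or H is a single point. -/

import Mathlib

open Pointwise

noncomputable section

/-- Laurent polynomials in two variables over `K`. -/
abbrev LP (K : Type*) [Field K] := AddMonoidAlgebra K (ℤ × ℤ)

/-- Embedding of lattice points into the real plane. -/
def toR : ℤ × ℤ → ℝ × ℝ := fun p => ((p.1 : ℝ), (p.2 : ℝ))

/-- The Newton polytope of a Laurent polynomial: convex hull of its exponent vectors. -/
def newtonPolytope {K : Type*} [Field K] (f : LP K) : Set (ℝ × ℝ) :=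
  convexHull ℝ (toR '' (f.coeff.support : Set (ℤ × ℤ)))

/-- A lattice segment whose only lattice points are its two (distinct) endpoints is not
the Minkowski sum of two lattice polytopes of positive dimension: if it is written as a
Minkowski sum of two lattice polytopes, one of them is a single point. -/
theorem stmt4 (a b : ℤ × ℤ) (hab : a ≠ b)
    (hedge : ∀ p : ℤ × ℤ, toR p ∈ segment ℝ (toR a) (toR b) → p = a ∨ p = b)
    (S T : Finset (ℤ × ℤ)) (hS : S.Nonempty) (hT : T.Nonempty)
    (hsum : segment ℝ (toR a) (toR b)
      = convexHull ℝ (toR '' (S : Set (ℤ × ℤ))) + convexHull ℝ (toR '' (T : Set (ℤ × ℤ)))) :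
    (∃ p : ℝ × ℝ, convexHull ℝ (toR '' (S : Set (ℤ × ℤ))) = {p}) ∨
    (∃ q : ℝ × ℝ, convexHull ℝ (toR '' (T : Set (ℤ × ℤ))) = {q}) := by
  have key : ∀ s ∈ S, ∀ t ∈ T, s + t = a ∨ s + t = b := by
    intro s hs t ht
    apply hedge
    have hadd : toR (s + t) = toR s + toR t := by
      simp [toR, Prod.ext_iff]
    rw [hadd, hsum]
    exact Set.add_mem_add (subset_convexHull ℝ _ ⟨s, hs, rfl⟩)
      (subset_convexHull ℝ _ ⟨t, ht, rfl⟩)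
  obtain ⟨s1, hs1⟩ := hS
  by_cases hone : ∀ s ∈ S, s = s1
  · left
    refine ⟨toR s1, ?_⟩
    have : (S : Set (ℤ × ℤ)) = {s1} := by
      ext x; simp only [Set.mem_singleton_iff, Finset.mem_coe]
      exact ⟨fun hx => hone x hx, fun hx => hx ▸ hs1⟩
    rw [this, Set.image_singleton, convexHull_singleton]
  · right
    push_neg at hone
    obtain ⟨s2, hs2, hs12⟩ := hone
    obtain ⟨t1, ht1⟩ := hT
    refine ⟨toR t1, ?_⟩
    have hTone : ∀ t ∈ T, t = t1 := by
      intro t2 ht2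
      by_contra ht12
      have h11 := key s1 hs1 t1 ht1
      have h12 := key s1 hs1 t2 ht2
      have h21 := key s2 hs2 t1 ht1
      have h22 := key s2 hs2 t2 ht2
      obtain ⟨a1, a2⟩ := a; obtain ⟨b1, b2⟩ := b
      obtain ⟨x1, x2⟩ := s1; obtain ⟨y1, y2⟩ := s2
      obtain ⟨u1, u2⟩ := t1; obtain ⟨v1, v2⟩ := t2
      simp only [Prod.mk_add_mk, Prod.mk.injEq, ne_eq, not_and] at *
      omega
    have : (T : Set (ℤ × ℤ)) = {t1} := by
      ext x; simp only [Set.mem_singleton_iff, Finset.mem_coe]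
      exact ⟨fun hx => hTone x hx, fun hx => hx ▸ ht1⟩
    rw [this, Set.image_singleton, convexHull_singleton]
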